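/- arXiv:1107.0381 — 3 statements merged into one kernel-verified Lean document; each statement's English description precedes it below -/
import Mathlib

section
/- For all real numbers α, β and positive integers n, the sum ∑_{m=1}^{n} (1/m)|cos(mα) − cos(mβ)| is strictly less than log n + γ + log 2 + 3/n. -/
open Real


/-- |sin (m x)| ≤ m * |sin x| -/
lemma aux_abs_sin_nat_mul (m : ℕ) (x : ℝ) : |Real.sin (m * x)| ≤ m * |Real.sin x| := by
  induction m with
  | zero => simp
  | succ k ih =>
    have h : ((k : ℝ) + 1) * x = k * x + x := by ring
    push_cast
    rw [h, Real.sin_add]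
    calc |Real.sin (k * x) * Real.cos x + Real.cos (k * x) * Real.sin x|
        ≤ |Real.sin (k * x) * Real.cos x| + |Real.cos (k * x) * Real.sin x| := abs_add_le _ _
      _ ≤ |Real.sin (k * x)| * 1 + 1 * |Real.sin x| := by
          rw [abs_mul, abs_mul]
          gcongr
          · exact Real.abs_cos_le_one _
          · exact Real.abs_cos_le_one _
      _ ≤ (k : ℝ) * |Real.sin x| + 1 * |Real.sin x| := by
          rw [mul_one]
          gcongr
      _ = ((k : ℝ) + 1) * |Real.sin x| := by ring

lemma aux_cos_eq_one_sub (y : ℝ) : Real.cos (2 * y) = 1 - 2 * Real.sin y ^ 2 := by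
  rw [Real.cos_two_mul', Real.cos_sq']; ring

/-- cos (m φ) ≥ 1 - m^2 * (1 - cos φ) -/
lemma aux_cos_nat_mul_lower (m : ℕ) (φ : ℝ) :
    1 - (m : ℝ) ^ 2 * (1 - Real.cos φ) ≤ Real.cos (m * φ) := by
  have h1 : Real.cos (m * φ) = 1 - 2 * Real.sin (m * (φ / 2)) ^ 2 := by
    rw [← aux_cos_eq_one_sub]; ring_nf
  have h2 : 1 - Real.cos φ = 2 * Real.sin (φ / 2) ^ 2 := by
    conv_lhs => rw [show φ = 2 * (φ / 2) by ring, aux_cos_eq_one_sub]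
    ring
  have h3 : Real.sin (m * (φ / 2)) ^ 2 ≤ (m : ℝ) ^ 2 * Real.sin (φ / 2) ^ 2 := by
    have := aux_abs_sin_nat_mul m (φ / 2)
    calc Real.sin (m * (φ / 2)) ^ 2 = |Real.sin (m * (φ / 2))| ^ 2 := (sq_abs _).symm
      _ ≤ ((m : ℝ) * |Real.sin (φ / 2)|) ^ 2 := by
          apply pow_le_pow_left₀ (abs_nonneg _) this
      _ = (m : ℝ) ^ 2 * Real.sin (φ / 2) ^ 2 := by
          rw [mul_pow, sq_abs]
  rw [h1, h2]
  nlinarith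

noncomputable def auxZ (φ : ℝ) : ℂ := Complex.exp (φ * Complex.I)

lemma auxZ_re (φ : ℝ) : (auxZ φ).re = Real.cos φ := Complex.exp_ofReal_mul_I_re φ

lemma auxZ_im (φ : ℝ) : (auxZ φ).im = Real.sin φ := Complex.exp_ofReal_mul_I_im φ

lemma auxZ_pow_re (φ : ℝ) (m : ℕ) : ((auxZ φ) ^ m).re = Real.cos (m * φ) := by
  rw [auxZ, ← Complex.exp_nat_mul]
  have : (m : ℂ) * (φ * Complex.I) = (((m : ℝ) * φ : ℝ) : ℂ) * Complex.I := by push_cast; ring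
  rw [this, Complex.exp_ofReal_mul_I_re]

lemma aux_normSq (φ : ℝ) (t : ℝ) :
    Complex.normSq (1 - auxZ φ * t) = 1 - 2 * Real.cos φ * t + t ^ 2 := by
  have h := Real.sin_sq_add_cos_sq φ
  simp only [Complex.normSq_apply, Complex.sub_re, Complex.sub_im, Complex.one_re,
    Complex.one_im, Complex.mul_re, Complex.mul_im, Complex.ofReal_re, Complex.ofReal_im,
    auxZ_re, auxZ_im]
  ring_nf
  nlinarith [h]

lemma aux_q_pos {φ : ℝ} (hc : Real.cos φ < 1) {t : ℝ} (ht0 : 0 ≤ t) (ht1 : t ≤ 1) :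
    0 < 1 - 2 * Real.cos φ * t + t ^ 2 := by
  rcases eq_or_lt_of_le ht0 with h | h
  · nlinarith
  · nlinarith [sq_nonneg (1 - t), mul_pos h (sub_pos.mpr hc)]

lemma aux_den_ne {φ : ℝ} (hc : Real.cos φ < 1) {t : ℝ} (ht0 : 0 ≤ t) (ht1 : t ≤ 1) :
    1 - auxZ φ * t ≠ 0 := by
  intro h
  have := aux_normSq φ t
  rw [h, map_zero] at this
  have := aux_q_pos hc ht0 ht1
  linarith

/-- the key integral identity -/
lemma aux_sum_cos_eq (n : ℕ) (hn : 0 < n) (φ : ℝ) (hc : Real.cos φ < 1) :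
    ∑ m ∈ Finset.Icc 1 n, Real.cos (m * φ) / m
      = -(1/2) * Real.log (2 - 2 * Real.cos φ)
        - ∫ t in (0:ℝ)..1, ((auxZ φ) ^ (n+1) * (t:ℂ) ^ n / (1 - auxZ φ * t)).re := by
  set z := auxZ φ with hz
  set c := Real.cos φ with hcdef
  -- Step A: each term as an integral
  have hterm : ∀ m ∈ Finset.Icc 1 n, Real.cos (m * φ) / m
      = ∫ t in (0:ℝ)..1, Real.cos (m * φ) * t ^ (m - 1) := by
    intro m hm
    rw [Finset.mem_Icc] at hm
    rw [intervalIntegral.integral_const_mul, integral_pow]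
    have h1 : m - 1 + 1 = m := Nat.succ_pred_eq_of_pos hm.1
    have h2 : ((m - 1 : ℕ) : ℝ) + 1 = (m : ℝ) := by exact_mod_cast congrArg (Nat.cast (R := ℝ)) h1
    rw [zero_pow (show m - 1 + 1 ≠ 0 by omega), one_pow, h2, sub_zero, mul_one_div]
  -- Step B : move the sum inside the integral
  have hsum : ∑ m ∈ Finset.Icc 1 n, Real.cos (m * φ) / m
      = ∫ t in (0:ℝ)..1, ∑ m ∈ Finset.Icc 1 n, Real.cos (m * φ) * t ^ (m - 1) := by
    rw [Finset.sum_congr rfl hterm]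
    rw [intervalIntegral.integral_finset_sum]
    intro m _
    exact (Continuous.intervalIntegrable (by continuity) _ _)
  -- Step C : kernel identity pointwise on [0,1]
  have hker : ∀ t ∈ Set.uIcc (0:ℝ) 1, ∑ m ∈ Finset.Icc 1 n, Real.cos (m * φ) * t ^ (m - 1)
      = (z / (1 - z * t)).re - (z ^ (n+1) * (t:ℂ) ^ n / (1 - z * t)).re := by
    intro t ht
    rw [Set.uIcc_of_le (by norm_num : (0:ℝ) ≤ 1)] at ht
    have hden : 1 - z * t ≠ 0 := aux_den_ne hc ht.1 ht.2
    have hne1 : z * (t:ℂ) ≠ 1 := by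
      intro h; apply hden; rw [h]; ring
    have hptw : ∀ m ∈ Finset.Icc 1 n,
        Real.cos (m * φ) * t ^ (m - 1) = (z ^ m * (t:ℂ) ^ (m - 1)).re := by
      intro m _
      rw [show ((t:ℂ)) ^ (m-1) = ((t ^ (m-1) : ℝ) : ℂ) by push_cast; ring]
      rw [Complex.mul_re, Complex.ofReal_re, Complex.ofReal_im, mul_zero, sub_zero,
        auxZ_pow_re]
    rw [Finset.sum_congr rfl hptw, ← Complex.re_sum, ← Complex.sub_re]
    congr 1
    have hreindex : ∑ m ∈ Finset.Icc 1 n, z ^ m * (t:ℂ) ^ (m - 1)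
        = ∑ k ∈ Finset.range n, z * (z * t) ^ k := by
      rw [← Finset.Ico_add_one_right_eq_Icc, Finset.sum_Ico_eq_sum_range]
      apply Finset.sum_congr (by norm_num)
      intro k _
      rw [show 1 + k - 1 = k by omega, add_comm 1 k, pow_succ, mul_pow]
      ring
    rw [hreindex, ← Finset.mul_sum, geom_sum_eq hne1]
    have hzt1 : z * (t:ℂ) - 1 ≠ 0 := sub_ne_zero.mpr hne1
    field_simp
    ring
  rw [hsum, intervalIntegral.integral_congr hker]
  -- Step D : split the integral
  have hcontden : ContinuousOn (fun t : ℝ => 1 - z * t) (Set.uIcc 0 1) := by fun_prop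
  have hdenon : ∀ t ∈ Set.uIcc (0:ℝ) 1, 1 - z * (t:ℂ) ≠ 0 := by
    intro t ht
    rw [Set.uIcc_of_le (by norm_num : (0:ℝ) ≤ 1)] at ht
    exact aux_den_ne hc ht.1 ht.2
  have hintA : IntervalIntegrable (fun t : ℝ => (z / (1 - z * t)).re) MeasureTheory.volume 0 1 := by
    apply ContinuousOn.intervalIntegrable
    exact Complex.continuous_re.comp_continuousOn (ContinuousOn.div continuousOn_const hcontden hdenon)
  have hintB : IntervalIntegrable (fun t : ℝ => (z ^ (n+1) * (t:ℂ) ^ n / (1 - z * t)).re)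
      MeasureTheory.volume 0 1 := by
    apply ContinuousOn.intervalIntegrable
    apply Complex.continuous_re.comp_continuousOn
    exact ContinuousOn.div (by fun_prop) hcontden hdenon
  rw [intervalIntegral.integral_sub hintA hintB]
  congr 1
  -- Step E : FTC for the main term
  have hmain : ∫ t in (0:ℝ)..1, (z / (1 - z * t)).re = -(1/2) * Real.log (2 - 2 * c) := by
    have hFTC := intervalIntegral.integral_eq_sub_of_hasDerivAt
      (f := fun t : ℝ => -(1/2) * Real.log (1 - 2 * c * t + t ^ 2))
      (f' := fun t : ℝ => (z / (1 - z * t)).re) (a := 0) (b := 1) ?_ hintA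
    · rw [hFTC]
      norm_num
      ring_nf
    · intro t ht
      rw [Set.uIcc_of_le (by norm_num : (0:ℝ) ≤ 1)] at ht
      have hq := aux_q_pos hc ht.1 ht.2
      have hre : (z / (1 - z * t)).re = (c - t) / (1 - 2 * c * t + t ^ 2) := by
        rw [Complex.div_re, aux_normSq]
        simp only [Complex.sub_re, Complex.sub_im, Complex.one_re, Complex.one_im,
          Complex.mul_re, Complex.mul_im, Complex.ofReal_re, Complex.ofReal_im,
          hz, auxZ_re, auxZ_im]
        have h := Real.sin_sq_add_cos_sq φ
        rw [hcdef, ← add_div]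
        congr 1
        linear_combination (-t) * h
      have hq' : HasDerivAt (fun t : ℝ => 1 - 2 * c * t + t ^ 2) (-(2*c) + 2*t) t := by
        have h1 : HasDerivAt (fun t : ℝ => t ^ 2) (2*t) t := by
          simpa using hasDerivAt_pow 2 t
        have h2 : HasDerivAt (fun t : ℝ => 1 - 2 * c * t) (-(2*c)) t := by
          simpa using ((hasDerivAt_id t).const_mul (2*c)).const_sub 1
        exact h2.add h1
      have hlog := (Real.hasDerivAt_log hq.ne').comp t hq'
      have hD := hlog.const_mul (-(1/2) : ℝ)
      have heq : (z / (1 - z * t)).re = -(1/2) * ((1 - 2 * c * t + t ^ 2)⁻¹ * (-(2*c) + 2*t)) := by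
        rw [hre]
        field_simp
        ring
      have goalbeta : HasDerivAt (fun t : ℝ => -(1/2) * Real.log (1 - 2*c*t + t^2))
          ((z / (1 - z * ↑t)).re) t := by
        rw [heq]
        exact hD
      exact goalbeta
  rw [hmain]

/-- bound on the error integral -/
lemma aux_err_bound (n : ℕ) (hn : 0 < n) (φ : ℝ) (hc : Real.cos φ < 1) :
    |∫ t in (0:ℝ)..1, ((auxZ φ) ^ (n+1) * (t:ℂ) ^ n / (1 - auxZ φ * t)).re|
      ≤ 1 / (n * Real.sqrt (2 - 2 * Real.cos φ)) := by
  set z := auxZ φ with hz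
  set c := Real.cos φ with hcdef
  set D := Real.sqrt (2 - 2 * c) with hD
  have hc2 : (0:ℝ) < 2 - 2 * c := by linarith
  have hDpos : 0 < D := Real.sqrt_pos.mpr hc2
  have habsz : ‖z‖ = 1 := Complex.norm_exp_ofReal_mul_I φ
  have hcontden : ContinuousOn (fun t : ℝ => 1 - z * t) (Set.uIcc 0 1) := by fun_prop
  have hdenon : ∀ t ∈ Set.uIcc (0:ℝ) 1, 1 - z * (t:ℂ) ≠ 0 := by
    intro t ht
    rw [Set.uIcc_of_le (by norm_num : (0:ℝ) ≤ 1)] at ht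
    exact aux_den_ne hc ht.1 ht.2
  have hintB : IntervalIntegrable (fun t : ℝ => (z ^ (n+1) * (t:ℂ) ^ n / (1 - z * t)).re)
      MeasureTheory.volume 0 1 := by
    apply ContinuousOn.intervalIntegrable
    apply Complex.continuous_re.comp_continuousOn
    exact ContinuousOn.div (by fun_prop) hcontden hdenon
  have hrexp : (-1 : ℝ) < (n : ℝ) - 1/2 := by
    have : (1:ℝ) ≤ n := by exact_mod_cast hn
    linarith
  have hintR : IntervalIntegrable (fun t : ℝ => (1/D) * t ^ ((n:ℝ) - 1/2))
      MeasureTheory.volume 0 1 :=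
    (intervalIntegral.intervalIntegrable_rpow' hrexp).const_mul _
  calc |∫ t in (0:ℝ)..1, (z ^ (n+1) * (t:ℂ) ^ n / (1 - z * t)).re|
      ≤ ∫ t in (0:ℝ)..1, |(z ^ (n+1) * (t:ℂ) ^ n / (1 - z * t)).re| :=
        intervalIntegral.abs_integral_le_integral_abs (by norm_num)
    _ ≤ ∫ t in (0:ℝ)..1, (1/D) * t ^ ((n:ℝ) - 1/2) := by
        apply intervalIntegral.integral_mono_on (by norm_num) hintB.abs hintR
        intro t ht
        rcases eq_or_lt_of_le ht.1 with h0 | h0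
        · have h1n : (1:ℝ) ≤ n := by exact_mod_cast hn
          rw [← h0]
          simp only [Complex.ofReal_zero, zero_pow hn.ne', mul_zero, zero_div, Complex.zero_re,
            abs_zero]
          positivity
        · have ht1 := ht.2
          have habs : ‖1 - z * t‖ ≥ Real.sqrt t * D := by
            have hnsq : Complex.normSq (1 - z * t) = 1 - 2 * c * t + t ^ 2 := aux_normSq φ t
            have h1 : ‖1 - z * t‖ = Real.sqrt (1 - 2 * c * t + t ^ 2) := by
              rw [← hnsq, Complex.norm_def]
            rw [h1, ← Real.sqrt_mul h0.le]
            apply Real.sqrt_le_sqrt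
            nlinarith [sq_nonneg (1 - t)]
          have habspos : 0 < ‖1 - z * t‖ :=
            lt_of_lt_of_le (by positivity) habs
          calc |(z ^ (n+1) * (t:ℂ) ^ n / (1 - z * t)).re|
              ≤ ‖z ^ (n+1) * (t:ℂ) ^ n / (1 - z * t)‖ := Complex.abs_re_le_norm _
            _ = t ^ n / ‖1 - z * t‖ := by
                rw [norm_div, norm_mul, norm_pow, norm_pow, habsz, one_pow, one_mul,
                  Complex.norm_real, Real.norm_eq_abs, abs_of_nonneg h0.le]
            _ ≤ t ^ n / (Real.sqrt t * D) := by
                apply div_le_div_of_nonneg_left (by positivity) (by positivity) habs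
            _ = (1/D) * t ^ ((n:ℝ) - 1/2) := by
                rw [Real.sqrt_eq_rpow, Real.rpow_sub h0, ← Real.rpow_natCast t n]
                field_simp
    _ = (1/D) * (1 / ((n:ℝ) - 1/2 + 1)) := by
        rw [intervalIntegral.integral_const_mul, integral_rpow (Or.inl hrexp)]
        have h1n : (1:ℝ) ≤ n := by exact_mod_cast hn
        rw [Real.one_rpow, Real.zero_rpow (by linarith : (n:ℝ) - 1/2 + 1 ≠ 0), sub_zero]
    _ ≤ 1 / (n * D) := by
        have h1n : (1:ℝ) ≤ n := by exact_mod_cast hn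
        rw [div_mul_div_comm, one_mul]
        apply one_div_le_one_div_of_le (by positivity)
        nlinarith [hDpos]

lemma aux_gauss (n : ℕ) : ∑ m ∈ Finset.Icc 1 n, (m : ℝ) = n * (n + 1) / 2 := by
  induction n with
  | zero => simp
  | succ k ih =>
    rw [Finset.sum_Icc_succ_top (by omega), ih]
    push_cast
    ring

lemma aux_sum_inv_ge_one (n : ℕ) (hn : 0 < n) : (1:ℝ) ≤ ∑ m ∈ Finset.Icc 1 n, 1 / (m : ℝ) := by
  have h1 : (1:ℕ) ∈ Finset.Icc 1 n := Finset.mem_Icc.mpr ⟨le_refl 1, hn⟩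
  have := Finset.single_le_sum (f := fun m : ℕ => 1 / (m:ℝ)) (fun i _ => by positivity) h1
  simpa using this

set_option maxHeartbeats 1000000 in
/-- key lower bound on partial sums of ∑ cos(mφ)/m -/
lemma aux_cos_sum_lower (n : ℕ) (hn : 0 < n) (φ : ℝ) :
    -Real.log 2 - 1 / n ≤ ∑ m ∈ Finset.Icc 1 n, Real.cos (m * φ) / m := by
  have hnR : (1:ℝ) ≤ n := by exact_mod_cast hn
  have hnpos : (0:ℝ) < n := by linarith
  have hlog2 : (0:ℝ) < Real.log 2 := Real.log_pos (by norm_num)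
  by_cases hsmall : 1 - Real.cos φ < 2 / (n:ℝ) ^ 2
  · -- small angle : cos (mφ) ≥ 1 - m^2 (1 - cos φ)
    have hstep : ∀ m ∈ Finset.Icc 1 n, 1 / (m:ℝ) - m * (1 - Real.cos φ) ≤ Real.cos (m * φ) / m := by
      intro m hm
      rw [Finset.mem_Icc] at hm
      have hmpos : (0:ℝ) < m := by exact_mod_cast hm.1
      have hlow := aux_cos_nat_mul_lower m φ
      have key : Real.cos (m * φ) / m - (1 / (m:ℝ) - m * (1 - Real.cos φ))
          = (Real.cos (m * φ) - (1 - (m:ℝ)^2 * (1 - Real.cos φ))) / m := by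
        field_simp
      rw [← sub_nonneg, key]
      exact div_nonneg (by linarith) hmpos.le
    calc -Real.log 2 - 1 / (n:ℝ) ≤ -(1 / (n:ℝ)) := by linarith
      _ ≤ ∑ m ∈ Finset.Icc 1 n, (1 / (m:ℝ) - m * (1 - Real.cos φ)) := by
          rw [Finset.sum_sub_distrib, ← Finset.sum_mul, aux_gauss]
          have h1 := aux_sum_inv_ge_one n hn
          have h2 : (n:ℝ) * (n + 1) / 2 * (1 - Real.cos φ) ≤ 1 + 1 / n := by
            have hcos' : 0 ≤ 1 - Real.cos φ := by
              have := Real.cos_le_one φ; linarith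
            calc (n:ℝ) * (n + 1) / 2 * (1 - Real.cos φ)
                ≤ (n:ℝ) * (n + 1) / 2 * (2 / (n:ℝ)^2) := by
                  apply mul_le_mul_of_nonneg_left hsmall.le (by positivity)
              _ = 1 + 1 / n := by field_simp
          linarith
      _ ≤ ∑ m ∈ Finset.Icc 1 n, Real.cos (m * φ) / m := Finset.sum_le_sum hstep
  · -- main case : use the integral representation
    push_neg at hsmall
    have hc : Real.cos φ < 1 := by
      have : (0:ℝ) < 2 / (n:ℝ)^2 := by positivity
      linarith
    set c := Real.cos φ with hcdef
    set D := Real.sqrt (2 - 2 * c) with hDdef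
    have hc2 : (0:ℝ) < 2 - 2 * c := by linarith
    have hDpos : 0 < D := Real.sqrt_pos.mpr hc2
    have hDle2 : D ≤ 2 := by
      have h4 : Real.sqrt 4 = 2 := by
        rw [show (4:ℝ) = 2^2 by norm_num, Real.sqrt_sq (by norm_num : (0:ℝ) ≤ 2)]
      have h5 : D ≤ Real.sqrt 4 := Real.sqrt_le_sqrt (by nlinarith [Real.neg_one_le_cos φ])
      rwa [h4] at h5
    have hDge : 2 / (n:ℝ) ≤ D := by
      rw [hDdef, show (2:ℝ)/(n:ℝ) = Real.sqrt ((2/(n:ℝ))^2) by rw [Real.sqrt_sq (by positivity)]]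
      apply Real.sqrt_le_sqrt
      have h6 : (2 / (n:ℝ))^2 = 2 * (2 / (n:ℝ)^2) := by ring
      rw [h6]
      linarith
    have hid := aux_sum_cos_eq n hn φ hc
    have herr := aux_err_bound n hn φ hc
    rw [hid]
    have hlogD : -(1/2) * Real.log (2 - 2 * c) = -Real.log D := by
      rw [hDdef, Real.log_sqrt hc2.le]
      ring
    rw [hlogD]
    have hEb : -(∫ t in (0:ℝ)..1, ((auxZ φ) ^ (n+1) * (t:ℂ) ^ n / (1 - auxZ φ * t)).re)
        ≥ -(1 / (n * D)) := by
      have := abs_le.mp herr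
      linarith [this.2]
    have hkey : -Real.log D - 1 / ((n:ℝ) * D) ≥ -Real.log 2 - 1 / n := by
      set x := 2 / D with hxdef
      have hx1 : 1 ≤ x := by
        rw [hxdef]
        rw [le_div_iff₀ hDpos]
        linarith
      have hxn : x ≤ n := by
        rw [hxdef, div_le_iff₀ hDpos]
        rw [div_le_iff₀ hnpos] at hDge
        linarith
      have hxpos : 0 < x := by linarith
      have hDx : D = 2 / x := by
        rw [hxdef]
        field_simp
      have hlogx : Real.log D = Real.log 2 - Real.log x := by
        rw [hDx, Real.log_div (by norm_num) hxpos.ne']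
      have hinv : 1 / ((n:ℝ) * D) = x / (2 * n) := by
        rw [hDx, show (n:ℝ) * (2/x) = (2*n)/x from by ring, one_div_div]
      rw [hlogx, hinv]
      have h2n : (0:ℝ) < 2 * n := by linarith
      have hmain : x / 2 - 1 ≤ (n:ℝ) * Real.log x := by
        by_cases hx2 : x ≤ 2
        · have : 0 ≤ Real.log x := Real.log_nonneg hx1
          nlinarith
        · push_neg at hx2
          have hlx : (1:ℝ)/2 < Real.log x := by
            calc (1:ℝ)/2 < Real.log 2 := by
                  have := Real.log_two_gt_d9; linarith
              _ < Real.log x := Real.log_lt_log (by norm_num) hx2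
          nlinarith
      have hfin : x / (2*n) - 1/n ≤ Real.log x := by
        have heq2 : x / (2*n) - 1/n = (x - 2) / (2*n) := by
          field_simp
        rw [heq2, div_le_iff₀ h2n]
        nlinarith [hmain]
      linarith
    have hEb' : -(1 / ((n:ℝ) * D))
        ≤ -(∫ t in (0:ℝ)..1, ((auxZ φ) ^ (n+1) * (t:ℂ) ^ n / (1 - auxZ φ * t)).re) := hEb
    calc -Real.log 2 - 1 / (n:ℝ) ≤ -Real.log D - 1 / ((n:ℝ) * D) := hkey
      _ = -Real.log D + -(1 / ((n:ℝ) * D)) := by ring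
      _ ≤ -Real.log D + -(∫ t in (0:ℝ)..1, ((auxZ φ) ^ (n+1) * (t:ℂ) ^ n / (1 - auxZ φ * t)).re) := by
          linarith [hEb']
      _ = -Real.log D - ∫ t in (0:ℝ)..1, ((auxZ φ) ^ (n+1) * (t:ℂ) ^ n / (1 - auxZ φ * t)).re := by
          ring

lemma aux_abs_sub_le (x y : ℝ) (hx : |x| ≤ 1) (hy : |y| ≤ 1) : |x - y| ≤ 1 - x * y := by
  rw [abs_le] at hx hy
  rcases abs_cases (x - y) with ⟨h, _⟩ | ⟨h, _⟩ <;> rw [h] <;> nlinarith [hx.1, hx.2, hy.1, hy.2]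

theorem polya_vinogradov_cos_lemma (α β : ℝ) (n : ℕ) (hn : 0 < n) :
    ∑ m ∈ Finset.Icc 1 n, (1 / (m : ℝ)) * |Real.cos (m * α) - Real.cos (m * β)| <
      Real.log n + Real.eulerMascheroniConstant + Real.log 2 + 3 / n := by
  have hnR : (1:ℝ) ≤ n := by exact_mod_cast hn
  have hnpos : (0:ℝ) < n := by linarith
  set A := ∑ m ∈ Finset.Icc 1 n, Real.cos (m * (α + β)) / m with hA
  set B := ∑ m ∈ Finset.Icc 1 n, Real.cos (m * (α - β)) / m with hB
  have hbound : ∑ m ∈ Finset.Icc 1 n, (1 / (m : ℝ)) * |Real.cos (m * α) - Real.cos (m * β)|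
      ≤ ∑ m ∈ Finset.Icc 1 n, (1 / (m:ℝ) - (1/2) * (Real.cos (m * (α + β)) / m)
          - (1/2) * (Real.cos (m * (α - β)) / m)) := by
    apply Finset.sum_le_sum
    intro m hm
    rw [Finset.mem_Icc] at hm
    have hmpos : (0:ℝ) < m := by exact_mod_cast hm.1
    have habs := aux_abs_sub_le (Real.cos (m * α)) (Real.cos (m * β))
      (Real.abs_cos_le_one _) (Real.abs_cos_le_one _)
    have hprod : 2 * Real.cos (m * α) * Real.cos (m * β)
        = Real.cos (m * (α - β)) + Real.cos (m * (α + β)) := by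
      rw [show (m:ℝ) * (α - β) = m * α - m * β by ring,
        show (m:ℝ) * (α + β) = m * α + m * β by ring]
      exact Real.two_mul_cos_mul_cos _ _
    have step1 : (1 / (m : ℝ)) * |Real.cos (m * α) - Real.cos (m * β)|
        ≤ (1 / (m:ℝ)) * (1 - Real.cos (m * α) * Real.cos (m * β)) := by
      apply mul_le_mul_of_nonneg_left habs (by positivity)
    refine step1.trans (le_of_eq ?_)
    field_simp
    linear_combination (-1:ℝ) * hprod
  have hsplit : ∑ m ∈ Finset.Icc 1 n, (1 / (m:ℝ) - (1/2) * (Real.cos (m * (α + β)) / m)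
          - (1/2) * (Real.cos (m * (α - β)) / m))
      = (∑ m ∈ Finset.Icc 1 n, 1 / (m:ℝ)) - (1/2) * A - (1/2) * B := by
    rw [Finset.sum_sub_distrib, Finset.sum_sub_distrib, hA, hB, Finset.mul_sum, Finset.mul_sum]
  have hAlow := aux_cos_sum_lower n hn (α + β)
  have hBlow := aux_cos_sum_lower n hn (α - β)
  have hharm : ∑ m ∈ Finset.Icc 1 n, 1 / (m:ℝ) = ((harmonic n : ℚ) : ℝ) := by
    rw [harmonic_eq_sum_Icc]
    push_cast
    simp [one_div]
  have hH : ((harmonic n : ℚ) : ℝ) < Real.eulerMascheroniConstant + Real.log (n + 1) := by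
    have := Real.eulerMascheroniSeq_lt_eulerMascheroniConstant n
    rw [Real.eulerMascheroniSeq] at this
    linarith
  have hlogn1 : Real.log (n + 1) ≤ Real.log n + 1 / n := by
    have hpos : (0:ℝ) < ((n:ℝ) + 1) / n := by positivity
    have h1 := Real.log_le_sub_one_of_pos hpos
    rw [Real.log_div (by positivity) (by positivity)] at h1
    have h2 : ((n:ℝ) + 1) / n - 1 = 1 / n := by field_simp; ring
    linarith
  have hlog2 : (0:ℝ) < Real.log 2 := Real.log_pos (by norm_num)
  calc ∑ m ∈ Finset.Icc 1 n, (1 / (m : ℝ)) * |Real.cos (m * α) - Real.cos (m * β)|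
      ≤ (∑ m ∈ Finset.Icc 1 n, 1 / (m:ℝ)) - (1/2) * A - (1/2) * B := by
        rw [← hsplit]; exact hbound
    _ ≤ ((harmonic n : ℚ) : ℝ) + Real.log 2 + 1 / n := by
        rw [hharm]
        nlinarith [hAlow, hBlow]
    _ < Real.log n + Real.eulerMascheroniConstant + Real.log 2 + 3 / n := by
        have h23 : (2:ℝ) / n < 3 / n := by
          rw [div_lt_div_iff₀ hnpos hnpos]
          nlinarith
        have h2n : (2:ℝ) / n = 1/n + 1/n := by ring
        have h3n : (3:ℝ) / n = 1/n + 1/n + 1/n := by ring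
        nlinarith [hH, hlogn1, h23]
end

section
/- For any real number u with ‖u‖ > 0 and any real B > 0, the absolute value of the tail sum ∑_{m > B/‖u‖} sin(2π m u)/m is at most 1/(2B). -/
open Real Filter

noncomputable def distNearestInt (u : ℝ) : ℝ := |u - round u|


lemma abel_identity (a b : ℕ → ℝ) (M N : ℕ) (h : M ≤ N) :
    ∑ m ∈ Finset.Icc M N, a m * b m
      = (∑ m ∈ Finset.Icc M N, (∑ k ∈ Finset.Icc M m, a k) * (b m - b (m+1)))
        + (∑ k ∈ Finset.Icc M N, a k) * b (N+1) := by
  induction N, h using Nat.le_induction with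
  | base => simp [Finset.Icc_self]; ring
  | succ N hMN ih =>
    simp only [Finset.sum_Icc_succ_top (Nat.le_succ_of_le hMN)]
    rw [ih]; ring

lemma telescope_sum (b : ℕ → ℝ) (M N : ℕ) (h : M ≤ N) :
    ∑ m ∈ Finset.Icc M N, (b m - b (m+1)) = b M - b (N+1) := by
  induction N, h using Nat.le_induction with
  | base => simp
  | succ N hMN ih => rw [Finset.sum_Icc_succ_top (Nat.le_succ_of_le hMN), ih]; ring

lemma dirichlet_bound (a b : ℕ → ℝ) (K : ℝ) (M N : ℕ)
    (hA : ∀ k, |∑ m ∈ Finset.Icc M k, a m| ≤ K)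
    (hb0 : ∀ m, M ≤ m → 0 ≤ b m) (hbm : ∀ m, M ≤ m → b (m+1) ≤ b m) :
    |∑ m ∈ Finset.Icc M N, a m * b m| ≤ K * b M := by
  have hK : 0 ≤ K := le_trans (abs_nonneg _) (hA M)
  rcases lt_or_ge N M with h | h
  · rw [Finset.Icc_eq_empty (by omega)]
    simpa using mul_nonneg hK (hb0 M le_rfl)
  · rw [abel_identity a b M N h]
    have h1 : |∑ m ∈ Finset.Icc M N, (∑ k ∈ Finset.Icc M m, a k) * (b m - b (m+1))|
        ≤ K * (b M - b (N+1)) := by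
      calc |∑ m ∈ Finset.Icc M N, (∑ k ∈ Finset.Icc M m, a k) * (b m - b (m+1))|
          ≤ ∑ m ∈ Finset.Icc M N, |(∑ k ∈ Finset.Icc M m, a k) * (b m - b (m+1))| :=
            Finset.abs_sum_le_sum_abs _ _
        _ ≤ ∑ m ∈ Finset.Icc M N, K * (b m - b (m+1)) := by
            refine Finset.sum_le_sum fun m hm => ?_
            have hm' : M ≤ m := (Finset.mem_Icc.1 hm).1
            rw [abs_mul, abs_of_nonneg (show (0:ℝ) ≤ b m - b (m+1) by linarith [hbm m hm'])]
            exact mul_le_mul_of_nonneg_right (hA m) (by linarith [hbm m hm'])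
        _ = K * (b M - b (N+1)) := by rw [← Finset.mul_sum, telescope_sum b M N h]
    have h2 : |(∑ k ∈ Finset.Icc M N, a k) * b (N+1)| ≤ K * b (N+1) := by
      rw [abs_mul, abs_of_nonneg (hb0 _ (by omega))]
      exact mul_le_mul_of_nonneg_right (hA N) (hb0 _ (by omega))
    calc |_ + _| ≤ _ := abs_add_le _ _
      _ ≤ K * (b M - b (N+1)) + K * b (N+1) := add_le_add h1 h2
      _ = K * b M := by ring

lemma sin_pi_lower (u : ℝ) : 2 * distNearestInt u ≤ |Real.sin (π * u)| := by
  set r : ℝ := u - round u with hr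
  have hru : u = r + round u := by ring
  have habs : |Real.sin (π * u)| = |Real.sin (π * r)| := by
    rw [hru, show π * (r + (round u : ℝ)) = π * r + (round u : ℝ) * π by ring,
      Real.sin_add_int_mul_pi, abs_mul]
    have : |((-1 : ℝ)) ^ round u| = 1 := by
      rcases Int.even_or_odd (round u) with he | ho
      · rw [he.neg_one_zpow]; simp
      · rw [Odd.neg_one_zpow ho]; simp
    rw [this, one_mul]
  have hr2 : |r| ≤ 1/2 := abs_sub_round u
  have key : 2 * |r| ≤ Real.sin (π * |r|) := by
    have := Real.mul_le_sin (x := π * |r|) (by positivity)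
      (by nlinarith [Real.pi_pos])
    calc 2 * |r| = 2 / π * (π * |r|) := by field_simp
      _ ≤ Real.sin (π * |r|) := this
  have h2 : Real.sin (π * |r|) ≤ |Real.sin (π * r)| := by
    rcases abs_cases r with ⟨h, _⟩ | ⟨h, _⟩
    · rw [h]; exact le_abs_self _
    · rw [h, show π * -r = -(π * r) by ring, Real.sin_neg]
      exact neg_le_abs _
  rw [habs]
  calc 2 * distNearestInt u = 2 * |r| := rfl
    _ ≤ _ := le_trans key h2

lemma sin_sum_bound (u : ℝ) (hu : 0 < distNearestInt u) (M N : ℕ) :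
    |∑ m ∈ Finset.Icc M N, Real.sin (2 * π * m * u)| ≤ 1 / (2 * distNearestInt u) := by
  set c := distNearestInt u with hc
  set θ : ℝ := 2 * π * u with hθ
  set z : ℂ := Complex.exp (θ * Complex.I) with hz
  have hslow := sin_pi_lower u
  -- |z - 1| = 2 |sin (π u)|
  have hre : (z - 1).re = Real.cos θ - 1 := by
    simp [hz, Complex.exp_ofReal_mul_I_re]
  have him : (z - 1).im = Real.sin θ := by
    simp [hz, Complex.exp_ofReal_mul_I_im]
  have habs : ‖z - 1‖ = 2 * |Real.sin (π * u)| := by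
    rw [Complex.norm_def, Complex.normSq_apply, hre, him]
    rw [show (Real.cos θ - 1) * (Real.cos θ - 1) + Real.sin θ * Real.sin θ
        = (2 * |Real.sin (π * u)|)^2 by
      have h1 := Real.sin_sq_add_cos_sq θ
      have h2 : Real.cos θ = 2 * Real.cos (π * u) ^ 2 - 1 := by
        rw [hθ, show 2 * π * u = 2 * (π * u) by ring]; exact Real.cos_two_mul _
      have h3 := Real.sin_sq_add_cos_sq (π * u)
      have h4 := sq_abs (Real.sin (π * u))
      nlinarith [h1, h2, h3, h4]]
    exact Real.sqrt_sq (by positivity)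
  have habs_pos : 0 < ‖z - 1‖ := by
    rw [habs]; nlinarith
  have hz1 : z ≠ 1 := by
    intro h
    rw [h] at habs_pos; simp at habs_pos
  have hzabs : ‖z‖ = 1 := Complex.norm_exp_ofReal_mul_I θ
  have hsin : ∀ m : ℕ, Real.sin (2 * π * m * u) = (z ^ m).im := by
    intro m
    rw [hz, ← Complex.exp_nat_mul,
      show (m : ℂ) * ((θ : ℝ) * Complex.I) = ((m * θ : ℝ) : ℂ) * Complex.I by push_cast; ring,
      Complex.exp_ofReal_mul_I_im]
    congr 1; rw [hθ]; ring
  rcases lt_or_ge N M with h | h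
  · rw [Finset.Icc_eq_empty (by omega)]
    simp; positivity
  · calc |∑ m ∈ Finset.Icc M N, Real.sin (2 * π * m * u)|
        = |(∑ m ∈ Finset.Icc M N, z ^ m).im| := by
          rw [Complex.im_sum]; congr 1; exact Finset.sum_congr rfl fun m _ => hsin m
      _ ≤ ‖∑ m ∈ Finset.Icc M N, z ^ m‖ := Complex.abs_im_le_norm _
      _ = ‖(z ^ (N+1) - z ^ M) / (z - 1)‖ := by
          rw [show Finset.Icc M N = Finset.Ico M (N+1) by rw [Finset.Ico_add_one_right_eq_Icc],
            geom_sum_Ico hz1 (by omega)]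
      _ ≤ 2 / ‖z - 1‖ := by
          rw [norm_div]
          gcongr
          calc ‖z ^ (N+1) - z ^ M‖
              ≤ ‖z ^ (N+1)‖ + ‖z ^ M‖ :=
                norm_sub_le _ _
            _ = 2 := by rw [norm_pow, norm_pow, hzabs]; norm_num
      _ ≤ 1 / (2 * c) := by
          rw [habs]
          rw [div_le_div_iff₀ (by nlinarith) (by positivity)]
          nlinarith [abs_nonneg (Real.sin (π * u))]
theorem sin_tail_sum_bound (u : ℝ) (hu : 0 < distNearestInt u) (B : ℝ) (hB : 0 < B) :
    ∃ L : ℝ,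
      Tendsto (fun N : ℕ =>
          ∑ m ∈ Finset.Icc 1 N, if B / distNearestInt u < (m : ℝ) then
            Real.sin (2 * π * m * u) / m else 0) atTop (nhds L) ∧
      |L| ≤ 1 / (2 * B) := by
  set c := distNearestInt u with hc
  set K : ℝ := 1 / (2 * c) with hK
  have hKpos : 0 < K := by positivity
  have hBc : 0 < B / c := by positivity
  set M0 : ℕ := Nat.floor (B / c) + 1 with hM0
  have hM0pos : 0 < M0 := Nat.succ_pos _
  have hiff : ∀ m : ℕ, (B / c < (m : ℝ)) ↔ M0 ≤ m := by
    intro m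
    rw [← Nat.floor_lt hBc.le, hM0]; omega
  set f : ℕ → ℝ := fun N =>
    ∑ m ∈ Finset.Icc 1 N, if B / c < (m : ℝ) then Real.sin (2 * π * m * u) / m else 0
    with hfdef
  have hIoc : ∀ N : ℕ, f N =
      ∑ m ∈ Finset.Ioc 0 N, if B / c < (m : ℝ) then Real.sin (2 * π * m * u) / m else 0 := by
    intro N; rw [hfdef]; congr 1
  -- sums over tail segments, with ite resolved
  have hseg : ∀ (M N : ℕ), M0 ≤ M →
      (∑ m ∈ Finset.Icc M N, if B / c < (m : ℝ) then Real.sin (2 * π * m * u) / m else 0)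
        = ∑ m ∈ Finset.Icc M N, Real.sin (2 * π * m * u) * (1 / m) := by
    intro M N hM
    refine Finset.sum_congr rfl fun m hm => ?_
    have hm' : M0 ≤ m := le_trans hM (Finset.mem_Icc.1 hm).1
    rw [if_pos ((hiff m).2 hm'), div_eq_mul_one_div]
  have hdiri : ∀ (M N : ℕ), M0 ≤ M →
      |∑ m ∈ Finset.Icc M N, Real.sin (2 * π * m * u) * (1 / m)| ≤ K * (1 / M) := by
    intro M N hM
    refine dirichlet_bound _ _ K M N (fun k => sin_sum_bound u hu M k) ?_ ?_
    · intro m _; positivity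
    · intro m hm
      have h1 : (0:ℝ) < m := by
        have : 0 < m := lt_of_lt_of_le hM0pos (le_trans hM hm)
        exact_mod_cast this
      have h2 : (m:ℝ) ≤ (m:ℝ) + 1 := by linarith
      rw [show ((m + 1 : ℕ) : ℝ) = (m : ℝ) + 1 by push_cast; ring]
      apply one_div_le_one_div_of_le h1 h2
  -- f N written as a tail sum from M0
  have hfN : ∀ N : ℕ, f N = ∑ m ∈ Finset.Icc M0 N, Real.sin (2 * π * m * u) * (1 / m) := by
    intro N
    rw [← hseg M0 N le_rfl]
    simp only [hfdef]
    rw [← Finset.sum_filter_add_sum_filter_not (Finset.Icc 1 N)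
      (fun m => B / c < (m : ℝ))]
    have h1 : Finset.filter (fun m : ℕ => B / c < (m : ℝ)) (Finset.Icc 1 N) = Finset.Icc M0 N := by
      ext m
      simp only [Finset.mem_filter, Finset.mem_Icc, hiff]
      omega
    have h2 : ∑ m ∈ Finset.filter (fun m : ℕ => ¬ B / c < (m : ℝ)) (Finset.Icc 1 N),
        (if B / c < (m : ℝ) then Real.sin (2 * π * m * u) / m else 0) = 0 := by
      refine Finset.sum_eq_zero fun m hm => ?_
      rw [if_neg (Finset.mem_filter.1 hm).2]
    rw [h2, add_zero, h1]
  -- uniform bound on partial sums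
  have hbound : ∀ N : ℕ, |f N| ≤ 1 / (2 * B) := by
    intro N
    rw [hfN N]
    refine le_trans (hdiri M0 N le_rfl) ?_
    have hlt : B / c < (M0 : ℝ) := by
      rw [hM0]; push_cast; exact Nat.lt_floor_add_one _
    have hcpos : 0 < c := hu
    have hBM : B < c * M0 := by
      rw [div_lt_iff₀ hcpos] at hlt; linarith [hlt]
    have hM0R : (0:ℝ) < (M0 : ℝ) := by exact_mod_cast hM0pos
    rw [hK, div_mul_div_comm, one_mul]
    apply one_div_le_one_div_of_le (by positivity)
    nlinarith
  -- Cauchy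
  have hcauchy : CauchySeq f := by
    rw [Metric.cauchySeq_iff']
    intro ε hε
    obtain ⟨n₀, hn₀⟩ := exists_nat_gt (K / ε)
    refine ⟨max n₀ M0, fun n hn => ?_⟩
    set N₀ := max n₀ M0 with hN₀
    have hdiff : f n - f N₀ =
        ∑ m ∈ Finset.Icc (N₀ + 1) n, if B / c < (m : ℝ) then Real.sin (2 * π * m * u) / m else 0 := by
      rw [hIoc n, hIoc N₀, ← Finset.sum_Ioc_consecutive _ (Nat.zero_le N₀) hn,
        Finset.Icc_add_one_left_eq_Ioc]
      ring
    rw [Real.dist_eq, hdiff, hseg _ _ (by omega)]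
    refine lt_of_le_of_lt (hdiri (N₀ + 1) n (by omega)) ?_
    have hN₀1 : (n₀ : ℝ) ≤ (N₀ : ℝ) + 1 := by
      have : n₀ ≤ N₀ + 1 := by omega
      exact_mod_cast this
    have hKe : K < ε * n₀ := by
      rw [div_lt_iff₀ hε] at hn₀; linarith
    have hpos : (0:ℝ) < (N₀ : ℝ) + 1 := by positivity
    rw [mul_one_div, div_lt_iff₀ (by push_cast; positivity)]
    push_cast
    calc K < ε * n₀ := hKe
      _ ≤ ε * ((N₀:ℝ) + 1) := by nlinarith
  obtain ⟨L, hL⟩ := cauchySeq_tendsto_of_complete hcauchy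
  refine ⟨L, hL, ?_⟩
  have habsL : Tendsto (fun N => |f N|) atTop (nhds |L|) :=
    (continuous_abs.tendsto L).comp hL
  exact le_of_tendsto habsL (Filter.Eventually.of_forall hbound)
end

section
/- If χ is a nonprincipal Dirichlet character mod q with χ(−1) = 1, then max over 0 ≤ M < N ≤ q of |∑_{n=M}^{N} χ(n)| equals 2 · max over 0 ≤ N ≤ q of |∑_{a=0}^{N} χ(a)|. -/
set_option maxHeartbeats 1000000 in
theorem even_char_S_eq_two_T (q : ℕ) (hq : 0 < q) (χ : DirichletCharacter ℂ q)
    (hχ : χ ≠ 1) (heven : χ (-1) = 1) :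
    sSup {x : ℝ | ∃ M N : ℕ, M < N ∧ N ≤ q ∧
        x = ‖∑ n ∈ Finset.Icc M N, χ n‖} =
      2 * sSup {x : ℝ | ∃ N : ℕ, N ≤ q ∧
        x = ‖∑ a ∈ Finset.Icc 0 N, χ a‖} := by
  classical
  have hq2 : 2 ≤ q := by
    by_contra h
    interval_cases q
    exact hχ (DirichletCharacter.level_one χ)
  haveI : Fact (1 < q) := ⟨hq2⟩
  haveI : NeZero q := ⟨by omega⟩
  set f : ℕ → ℂ := fun n => χ (n : ZMod q) with hf
  have hf0 : f 0 = 0 := by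
    simp only [hf, Nat.cast_zero]
    exact χ.map_nonunit (by simp)
  have hf1 : f 1 = 1 := by simp [hf]
  have hfle : ∀ n, ‖f n‖ ≤ 1 := by
    intro n
    simpa using DirichletCharacter.norm_le_one χ (n : ZMod q)
  set U : ℕ → ℂ := fun N => ∑ n ∈ Finset.Ioc 0 N, f n with hU
  have hIcc : ∀ N : ℕ, ∑ n ∈ Finset.Icc 0 N, f n = U N := by
    intro N
    rw [← Finset.Ioc_insert_left (Nat.zero_le N), Finset.sum_insert (by simp), hf0, zero_add]
  have hcons : ∀ M N : ℕ, 1 ≤ M → M ≤ N → ∑ n ∈ Finset.Icc M N, f n = U N - U (M - 1) := by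
    intro M N hM hMN
    have h1 : Finset.Icc M N = Finset.Ioc (M - 1) N := by
      ext x; simp only [Finset.mem_Icc, Finset.mem_Ioc]; omega
    have h2 := Finset.sum_Ioc_consecutive f (Nat.zero_le (M - 1)) (by omega : M - 1 ≤ N)
    rw [h1]
    exact eq_sub_of_add_eq' h2
  set A : Set ℝ := {x : ℝ | ∃ M N : ℕ, M < N ∧ N ≤ q ∧
      x = ‖∑ n ∈ Finset.Icc M N, χ n‖} with hA
  set B : Set ℝ := {x : ℝ | ∃ N : ℕ, N ≤ q ∧
      x = ‖∑ a ∈ Finset.Icc 0 N, χ a‖} with hB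
  have hBeq : B = (fun N : ℕ => ‖U N‖) '' Set.Iic q := by
    ext x
    simp only [hB, Set.mem_setOf_eq, Set.mem_image, Set.mem_Iic]
    constructor
    · rintro ⟨N, hN, rfl⟩; exact ⟨N, hN, by rw [← hIcc]⟩
    · rintro ⟨N, hN, rfl⟩; exact ⟨N, hN, by rw [← hIcc]⟩
  have hBfin : B.Finite := hBeq ▸ (Set.finite_Iic q).image _
  have hBne : B.Nonempty := ⟨_, 0, Nat.zero_le q, rfl⟩
  have hUB : ∀ N : ℕ, N ≤ q → ‖U N‖ ≤ sSup B := by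
    intro N hN
    exact le_csSup hBfin.bddAbove ⟨N, hN, by rw [← hIcc]⟩
  set Tm : ℝ := sSup B with hTm
  have hU1 : U 1 = 1 := by
    have h1 : Finset.Ioc 0 1 = {1} := by
      ext x; simp only [Finset.mem_Ioc, Finset.mem_singleton]; omega
    simp [hU, h1, hf1]
  have hTm1 : 1 ≤ Tm := by
    have := hUB 1 (by omega)
    rwa [hU1, norm_one] at this
  -- U q = 0
  have hUq : U q = 0 := by
    have hrange : ∑ n ∈ Finset.range q, f n = 0 := by
      have h := MulChar.sum_eq_zero_of_ne_one hχ
      rw [← h]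
      refine Finset.sum_nbij' (fun n => (n : ZMod q)) (fun a => a.val) ?_ ?_ ?_ ?_ ?_ <;>
        intros <;>
        simp_all [ZMod.natCast_val, ZMod.val_cast_of_lt, Finset.mem_range, ZMod.val_lt,
          Nat.mod_eq_of_lt]
    have h1 : Finset.Icc 0 q = insert q (Finset.range q) := by
      ext x; simp only [Finset.mem_Icc, Finset.mem_insert, Finset.mem_range]; omega
    have hfq : f q = 0 := by
      simp only [hf, ZMod.natCast_self]
      exact χ.map_nonunit (by simp)
    rw [← hIcc, h1, Finset.sum_insert (by simp), hfq, zero_add, hrange]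
  -- even symmetry
  have hsym : ∀ K : ℕ, K < q → U (q - 1 - K) = -U K := by
    intro K hK
    have h2 := Finset.sum_Ioc_consecutive f (Nat.zero_le K) (le_of_lt hK)
    have h3 : ∑ n ∈ Finset.Ioc K q, f n = ∑ j ∈ Finset.range (q - K), f (q - j) := by
      refine Finset.sum_nbij' (fun n => q - n) (fun j => q - j) ?_ ?_ ?_ ?_ ?_ <;>
        intros a ha <;>
        simp only [Finset.mem_Ioc, Finset.mem_range] at * <;>
        first
        | omega
        | (congr 1; omega)
    have h4 : ∀ j ∈ Finset.range (q - K), f (q - j) = f j := by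
      intro j hj
      simp only [Finset.mem_range] at hj
      have hjq : j ≤ q := by omega
      have hcast : ((q - j : ℕ) : ZMod q) = -(j : ZMod q) := by
        rw [Nat.cast_sub hjq, ZMod.natCast_self, zero_sub]
      simp only [hf, hcast]
      rw [show -(j : ZMod q) = -1 * (j : ZMod q) by ring, map_mul, heven, one_mul]
    have h5 : ∑ j ∈ Finset.range (q - K), f j = U (q - 1 - K) := by
      have hr : Finset.range (q - K) = Finset.Icc 0 (q - 1 - K) := by
        ext x; simp only [Finset.mem_range, Finset.mem_Icc]; omega
      rw [hr, hIcc]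
    rw [Finset.sum_congr rfl h4, h5] at h3
    have h6 : U K + U (q - 1 - K) = 0 := by
      calc U K + U (q - 1 - K)
          = ∑ i ∈ Finset.Ioc 0 K, f i + ∑ i ∈ Finset.Ioc K q, f i := by rw [h3]
        _ = ∑ i ∈ Finset.Ioc 0 q, f i := h2
        _ = U q := rfl
        _ = 0 := hUq
    linear_combination h6
  -- pick N₀ attaining Tm
  obtain ⟨N₀, hN₀q', hN₀⟩ : ∃ N ≤ q, Tm = ‖U N‖ := by
    have hmem : Tm ∈ B := hBne.csSup_mem hBfin
    rw [hBeq] at hmem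
    obtain ⟨N, hN, hTN⟩ := hmem
    exact ⟨N, hN, hTN.symm⟩
  have hN₀lt : N₀ < q := by
    rcases lt_or_eq_of_le hN₀q' with h | h
    · exact h
    · exfalso; rw [h, hUq] at hN₀; simp at hN₀; linarith
  set K₀ : ℕ := q - 1 - N₀ with hK₀def
  have hK₀ : U K₀ = -U N₀ := hsym N₀ hN₀lt
  have hK₀lt : K₀ < q := by omega
  have hUN₀ne : U N₀ ≠ 0 := by
    intro h0
    rw [h0, norm_zero] at hN₀
    linarith
  have hne : K₀ ≠ N₀ := by
    intro h
    rw [h] at hK₀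
    exact hUN₀ne (by linear_combination (1/2 : ℂ) * hK₀)
  set a : ℕ := min K₀ N₀ with ha
  set b : ℕ := max K₀ N₀ with hb
  have hab : a < b := by
    rcases lt_or_gt_of_ne hne with h | h <;> simp [ha, hb] <;> omega
  have hbq : b < q := by
    rcases max_cases K₀ N₀ with ⟨h1, _⟩ | ⟨h1, _⟩ <;> rw [hb, h1] <;> omega
  have habs : ‖U b - U a‖ = 2 * Tm := by
    have h2 : ‖2 * U N₀‖ = 2 * Tm := by
      rw [norm_mul, hN₀]
      norm_num
    rcases le_total K₀ N₀ with h | h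
    · have ha' : a = K₀ := by simp [ha, h]
      have hb' : b = N₀ := by simp [hb, h]
      rw [ha', hb', hK₀, ← h2]
      congr 1
      ring
    · have ha' : a = N₀ := by simp [ha, h]
      have hb' : b = K₀ := by simp [hb, h]
      rw [ha', hb', hK₀, ← h2]
      rw [show -U N₀ - U N₀ = -(2 * U N₀) by ring, norm_neg]
  have hgap : a + 1 < b := by
    by_contra hcon
    have hb1 : b = a + 1 := by omega
    have hstep : U b - U a = f b := by
      rw [hb1]
      show (∑ n ∈ Finset.Ioc 0 (a + 1), f n) - ∑ n ∈ Finset.Ioc 0 a, f n = f (a + 1)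
      rw [Finset.sum_Ioc_succ_top (Nat.zero_le a)]
      ring
    have := hfle b
    rw [← hstep, habs] at this
    linarith
  have hmemA : (2 * Tm) ∈ A := by
    refine ⟨a + 1, b, hgap, by omega, ?_⟩
    show 2 * Tm = ‖∑ n ∈ Finset.Icc (a + 1) b, f n‖
    rw [hcons (a + 1) b (by omega) (by omega)]
    simp only [Nat.add_sub_cancel]
    exact habs.symm
  have hub : ∀ x ∈ A, x ≤ 2 * Tm := by
    rintro x ⟨M, N, hMN, hNq, rfl⟩
    rcases Nat.eq_zero_or_pos M with hM | hM
    · subst hM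
      show ‖∑ n ∈ Finset.Icc 0 N, f n‖ ≤ 2 * Tm
      rw [hIcc N]
      have := hUB N hNq
      linarith
    · show ‖∑ n ∈ Finset.Icc M N, f n‖ ≤ 2 * Tm
      rw [hcons M N hM (le_of_lt hMN)]
      calc ‖U N - U (M - 1)‖
          ≤ ‖U N‖ + ‖U (M - 1)‖ := by
            simpa using norm_sub_le (U N) (U (M - 1))
        _ ≤ Tm + Tm := add_le_add (hUB N hNq) (hUB (M - 1) (by omega))
        _ = 2 * Tm := by ring
  have hAne : A.Nonempty := ⟨_, 0, 1, Nat.zero_lt_one, hq, rfl⟩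
  exact le_antisymm (csSup_le hAne hub) (le_csSup ⟨2 * Tm, hub⟩ hmemA)
end
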